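/- arXiv:1410.6204 — 2 statements merged into one kernel-verified Lean document; each statement's English description precedes it below -/
import Mathlib

section
/- Let K_n be the complete graph on n ≥ 2 vertices and let 1 < p < ∞. Then (1 + (n-1)/n^p)^{1/p} ≤ ‖M_{K_n}‖_p ≤ (1 + (n-1)/n)^{1/p}. In particular, 1 ≤ ‖M_{K_n}‖_p ≤ 2 for every n and every p > 1. -/
open scoped Classical
open Finset

noncomputable section

variable {V : Type*} [Fintype V]

/-- metric ball of radius `r` centered at `v` in the graph `G` -/
def gBall (G : SimpleGraph V) (v : V) (r : ℕ) : Finset V :=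
  Finset.univ.filter fun w => G.dist v w ≤ r

/-- Hardy–Littlewood maximal operator on the graph `G` -/
def maxOp (G : SimpleGraph V) (f : V → ℝ) (v : V) : ℝ :=
  ⨆ k : Fin (Fintype.card V), (∑ w ∈ gBall G v k.1, |f w|) / ((gBall G v k.1).card : ℝ)

/-- ℓ^p (quasi)norm of a function on the vertices -/
def pNorm (p : ℝ) (f : V → ℝ) : ℝ := (∑ v, |f v| ^ p) ^ (1 / p)

/-- operator (quasi)norm of the maximal operator of `G` on ℓ^p -/
def opNorm (G : SimpleGraph V) (p : ℝ) : ℝ :=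
  ⨆ f : {f : V → ℝ // f ≠ 0}, pNorm p (maxOp G f.1) / pNorm p f.1

/-- weak ℓ^p norm -/
def wNorm (p : ℝ) (f : V → ℝ) : ℝ :=
  ⨆ t : {t : ℝ // 0 < t},
    t.1 * ((Finset.univ.filter fun v => t.1 < |f v|).card : ℝ) ^ (1 / p)

/-- weak-type operator norm of the maximal operator of `G` -/
def wOpNorm (G : SimpleGraph V) (p : ℝ) : ℝ :=
  ⨆ f : {f : V → ℝ // f ≠ 0}, wNorm p (maxOp G f.1) / pNorm p f.1

/-- maximal operator over all graphs on `V` isomorphic to `G` -/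
def maxOpIso (G : SimpleGraph V) (f : V → ℝ) (j : V) : ℝ :=
  ⨆ H : {H : SimpleGraph V // Nonempty (H ≃g G)}, maxOp H.1 f j

/-- operator norm of `maxOpIso` on ℓ^p -/
def opNormIso (G : SimpleGraph V) (p : ℝ) : ℝ :=
  ⨆ f : {f : V → ℝ // f ≠ 0}, pNorm p (maxOpIso G f.1) / pNorm p f.1

/-- Kronecker delta at `k` -/
def kdelta (k : V) : V → ℝ := fun j => if j = k then 1 else 0

/-- star graph on `Fin n` with center `0` -/
def starGraph (n : ℕ) : SimpleGraph (Fin n) :=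
  SimpleGraph.fromRel fun i _ => i.1 = 0

/-- diameter of a graph -/
def gDiam (G : SimpleGraph V) : ℕ :=
  Finset.univ.sup fun p : V × V => G.dist p.1 p.2

/-- dilation index of a graph -/
def dilIndex (G : SimpleGraph V) : ℝ :=
  ⨆ x : V, ⨆ r : {r : ℕ // r ≤ gDiam G},
    ((gBall G x (3 * r.1)).card : ℝ) / ((gBall G x r.1).card : ℝ)

/-- overlapping index of a graph -/
def overlapIndex (G : SimpleGraph V) : ℕ :=
  sInf { r : ℕ | ∀ J : Finset (V × ℕ), ∃ I ⊆ J,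
    J.biUnion (fun j => gBall G j.1 j.2) = I.biUnion (fun i => gBall G i.1 i.2) ∧
    ∀ v : V, (I.filter fun i => v ∈ gBall G i.1 i.2).card ≤ r }

lemma gball_top_zero {n : ℕ} (v : Fin n) :
    gBall (⊤ : SimpleGraph (Fin n)) v 0 = {v} := by
  ext w
  simp only [gBall, mem_filter, mem_univ, true_and, Nat.le_zero, mem_singleton]
  constructor
  · intro h
    rcases SimpleGraph.dist_eq_zero_iff_eq_or_not_reachable.mp h with h | h
    · exact h.symm
    · by_contra hne
      exact h (SimpleGraph.Adj.reachable (by simpa using Ne.symm hne))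
  · rintro rfl; simp

lemma gball_top_pos {n k : ℕ} (hk : 1 ≤ k) (v : Fin n) :
    gBall (⊤ : SimpleGraph (Fin n)) v k = univ := by
  ext w
  simp only [gBall, mem_filter, mem_univ, true_and, iff_true]
  rcases eq_or_ne v w with rfl | hne
  · simp [SimpleGraph.dist_self]
  · calc (⊤ : SimpleGraph (Fin n)).dist v w ≤ 1 := by
          have hadj : (⊤ : SimpleGraph (Fin n)).Adj v w := by simpa using hne
          simpa using SimpleGraph.dist_le (SimpleGraph.Walk.cons hadj SimpleGraph.Walk.nil)
        _ ≤ k := hk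

lemma maxOp_top {n : ℕ} (hn : 2 ≤ n) (f : Fin n → ℝ) (v : Fin n) :
    maxOp (⊤ : SimpleGraph (Fin n)) f v = max |f v| ((∑ w, |f w|) / n) := by
  have hcard : Fintype.card (Fin n) = n := Fintype.card_fin n
  have hterm : ∀ k : Fin (Fintype.card (Fin n)),
      (∑ w ∈ gBall (⊤ : SimpleGraph (Fin n)) v k.1, |f w|) /
        ((gBall (⊤ : SimpleGraph (Fin n)) v k.1).card : ℝ)
        = if k.1 = 0 then |f v| else (∑ w, |f w|) / n := by
    intro k
    rcases Nat.eq_zero_or_pos k.1 with h0 | h1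
    · simp [h0, gball_top_zero]
    · rw [if_neg (Nat.pos_iff_ne_zero.mp h1), gball_top_pos h1, card_univ, hcard]
  haveI : Nonempty (Fin (Fintype.card (Fin n))) := ⟨⟨0, by omega⟩⟩
  apply le_antisymm
  · apply ciSup_le
    intro k
    rw [hterm k]
    split
    · exact le_max_left _ _
    · exact le_max_right _ _
  · have hbdd : BddAbove (Set.range fun k : Fin (Fintype.card (Fin n)) =>
        (∑ w ∈ gBall (⊤ : SimpleGraph (Fin n)) v k.1, |f w|) /
          ((gBall (⊤ : SimpleGraph (Fin n)) v k.1).card : ℝ)) :=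
      Set.Finite.bddAbove (Set.finite_range _)
    apply max_le
    · have := le_ciSup hbdd ⟨0, by omega⟩
      rwa [hterm ⟨0, by omega⟩] at this
    · have := le_ciSup hbdd ⟨1, by omega⟩
      rw [hterm ⟨1, by omega⟩] at this
      simp at this
      exact this

lemma key_sum_bound {n : ℕ} (hn : 2 ≤ n) {p : ℝ} (hp : 1 < p) (f : Fin n → ℝ) :
    ∑ v, (max |f v| ((∑ w, |f w|) / n)) ^ p
      ≤ (1 + ((n : ℝ) - 1) / n) * ∑ v, |f v| ^ p := by
  have hn0 : (0 : ℝ) < n := by positivity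
  set a : Fin n → ℝ := fun v => |f v| with ha
  set S : ℝ := ∑ w, a w with hS
  set m : ℝ := S / n with hm
  have hanneg : ∀ v, 0 ≤ a v := fun v => abs_nonneg _
  have hmnneg : 0 ≤ m := by
    apply div_nonneg _ hn0.le
    exact Finset.sum_nonneg fun v _ => hanneg v
  obtain ⟨v0, -, hv0⟩ := Finset.exists_max_image (univ : Finset (Fin n)) a ⟨⟨0, by omega⟩, mem_univ _⟩
  have hmv0 : m ≤ a v0 := by
    rw [hm, div_le_iff₀ hn0]
    calc S ≤ (univ : Finset (Fin n)).card • a v0 :=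
          Finset.sum_le_card_nsmul _ _ _ fun v _ => hv0 v (mem_univ v)
      _ = a v0 * n := by simp [mul_comm]
  -- power mean inequality
  have hpm : m ^ p ≤ (1 / n) * ∑ v, a v ^ p := by
    have := Real.rpow_arith_mean_le_arith_mean_rpow (univ : Finset (Fin n))
      (fun _ => 1 / (n : ℝ)) a (fun i _ => by positivity)
      (by simp; field_simp) (fun i _ => hanneg i) hp.le
    calc m ^ p = (∑ v, (1 / (n : ℝ)) * a v) ^ p := by
          rw [← Finset.mul_sum, hm, hS]; ring_nf
      _ ≤ ∑ v, (1 / (n : ℝ)) * a v ^ p := this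
      _ = (1 / n) * ∑ v, a v ^ p := by rw [Finset.mul_sum]
  have hmaxle : ∀ v, (max (a v) m) ^ p ≤ a v ^ p + m ^ p := by
    intro v
    rcases max_choice (a v) m with h | h <;> rw [h]
    · nlinarith [Real.rpow_nonneg hmnneg p]
    · nlinarith [Real.rpow_nonneg (hanneg v) p]
  have hsplit : ∑ v, (max (a v) m) ^ p
      = (max (a v0) m) ^ p + ∑ v ∈ univ.erase v0, (max (a v) m) ^ p :=
    (Finset.add_sum_erase _ _ (mem_univ v0)).symm
  have hsplit2 : ∑ v, a v ^ p = a v0 ^ p + ∑ v ∈ univ.erase v0, a v ^ p :=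
    (Finset.add_sum_erase _ _ (mem_univ v0)).symm
  have hcarde : ((univ.erase v0).card : ℝ) = (n : ℝ) - 1 := by
    rw [Finset.card_erase_of_mem (mem_univ v0)]
    simp only [card_univ, Fintype.card_fin]
    rw [Nat.cast_sub (by omega)]; simp
  have herase : ∑ v ∈ univ.erase v0, (max (a v) m) ^ p
      ≤ (∑ v ∈ univ.erase v0, a v ^ p) + ((n : ℝ) - 1) * m ^ p := by
    calc ∑ v ∈ univ.erase v0, (max (a v) m) ^ p
        ≤ ∑ v ∈ univ.erase v0, (a v ^ p + m ^ p) :=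
          Finset.sum_le_sum fun v _ => hmaxle v
      _ = (∑ v ∈ univ.erase v0, a v ^ p) + ((n : ℝ) - 1) * m ^ p := by
          rw [Finset.sum_add_distrib, Finset.sum_const, nsmul_eq_mul, hcarde]
  have hmaxv0 : (max (a v0) m) ^ p = a v0 ^ p := by rw [max_eq_left hmv0]
  have hn1 : (0 : ℝ) ≤ (n : ℝ) - 1 := by
    have : (1 : ℝ) ≤ n := by exact_mod_cast (by omega : 1 ≤ n)
    linarith
  calc ∑ v, (max (a v) m) ^ p
      = a v0 ^ p + ∑ v ∈ univ.erase v0, (max (a v) m) ^ p := by rw [hsplit, hmaxv0]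
    _ ≤ a v0 ^ p + ((∑ v ∈ univ.erase v0, a v ^ p) + ((n : ℝ) - 1) * m ^ p) := by
        linarith [herase]
    _ = (∑ v, a v ^ p) + ((n : ℝ) - 1) * m ^ p := by rw [hsplit2]; ring
    _ ≤ (∑ v, a v ^ p) + ((n : ℝ) - 1) * ((1 / n) * ∑ v, a v ^ p) := by
        nlinarith [hpm, hn1]
    _ = (1 + ((n : ℝ) - 1) / n) * ∑ v, a v ^ p := by ring

lemma pNorm_pos {n : ℕ} {p : ℝ} (hp : 1 < p) {f : Fin n → ℝ} (hf : f ≠ 0) :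
    0 < pNorm p f := by
  have hp0 : (0 : ℝ) < p := lt_trans one_pos hp
  obtain ⟨v, hv⟩ : ∃ v, f v ≠ 0 := by
    by_contra h; push_neg at h; exact hf (funext h)
  have hsum : 0 < ∑ w, |f w| ^ p := by
    apply Finset.sum_pos' (fun w _ => Real.rpow_nonneg (abs_nonneg _) p)
    exact ⟨v, mem_univ v, Real.rpow_pos_of_pos (abs_pos.mpr hv) p⟩
  exact Real.rpow_pos_of_pos hsum _

lemma upper_ratio {n : ℕ} (hn : 2 ≤ n) {p : ℝ} (hp : 1 < p) (f : Fin n → ℝ) (hf : f ≠ 0) :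
    pNorm p (maxOp (⊤ : SimpleGraph (Fin n)) f) / pNorm p f
      ≤ (1 + ((n : ℝ) - 1) / n) ^ (1 / p) := by
  have hp0 : (0 : ℝ) < p := lt_trans one_pos hp
  have hC : (0 : ℝ) ≤ 1 + ((n : ℝ) - 1) / n := by
    have h1 : (1 : ℝ) ≤ n := by exact_mod_cast (by omega : 1 ≤ n)
    have h2 : (0:ℝ) ≤ ((n:ℝ)-1)/n := div_nonneg (by linarith) (by linarith)
    linarith
  have hMeq : ∀ v, |maxOp (⊤ : SimpleGraph (Fin n)) f v|
      = max |f v| ((∑ w, |f w|) / n) := by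
    intro v
    rw [maxOp_top hn]
    refine abs_of_nonneg (le_max_of_le_left (abs_nonneg _))
  have hkey : ∑ v, |maxOp (⊤ : SimpleGraph (Fin n)) f v| ^ p
      ≤ (1 + ((n : ℝ) - 1) / n) * ∑ v, |f v| ^ p := by
    calc ∑ v, |maxOp (⊤ : SimpleGraph (Fin n)) f v| ^ p
        = ∑ v, (max |f v| ((∑ w, |f w|) / n)) ^ p := by
          exact Finset.sum_congr rfl fun v _ => by rw [hMeq v]
      _ ≤ _ := key_sum_bound hn hp f
  have hfs : (0 : ℝ) ≤ ∑ v, |f v| ^ p :=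
    Finset.sum_nonneg fun v _ => Real.rpow_nonneg (abs_nonneg _) _
  have hMs : (0 : ℝ) ≤ ∑ v, |maxOp (⊤ : SimpleGraph (Fin n)) f v| ^ p :=
    Finset.sum_nonneg fun v _ => Real.rpow_nonneg (abs_nonneg _) _
  rw [div_le_iff₀ (pNorm_pos hp hf)]
  unfold pNorm
  rw [← Real.mul_rpow hC hfs]
  exact Real.rpow_le_rpow hMs hkey (by positivity)

lemma delta_ratio {n : ℕ} (hn : 2 ≤ n) {p : ℝ} (hp : 1 < p) :
    pNorm p (maxOp (⊤ : SimpleGraph (Fin n)) (kdelta ⟨0, by omega⟩)) /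
      pNorm p (kdelta (⟨0, by omega⟩ : Fin n))
      = (1 + ((n : ℝ) - 1) / (n : ℝ) ^ p) ^ (1 / p) := by
  have hp0 : (0 : ℝ) < p := lt_trans one_pos hp
  have hn0 : (0 : ℝ) < n := by positivity
  set z : Fin n := ⟨0, by omega⟩
  have habs : ∀ v, |kdelta z v| = if v = z then 1 else 0 := by
    intro v; unfold kdelta; split <;> simp
  have hS : ∑ w, |kdelta z w| = 1 := by
    simp only [habs]; rw [Finset.sum_ite_eq' univ z (fun _ => (1:ℝ))]; simp
  have hpd : pNorm p (kdelta z) = 1 := by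
    unfold pNorm
    have : ∑ v, |kdelta z v| ^ p = 1 := by
      rw [← Finset.add_sum_erase _ _ (mem_univ z)]
      rw [habs z, if_pos rfl, Real.one_rpow]
      have : ∀ v ∈ univ.erase z, |kdelta z v| ^ p = 0 := by
        intro v hv
        rw [habs v, if_neg (Finset.ne_of_mem_erase hv), Real.zero_rpow (by linarith)]
      rw [Finset.sum_eq_zero this]; ring
    rw [this, Real.one_rpow]
  have hM : ∀ v, |maxOp (⊤ : SimpleGraph (Fin n)) (kdelta z) v|
      = if v = z then (1:ℝ) else 1 / (n:ℝ) := by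
    intro v
    rw [abs_of_nonneg (by rw [maxOp_top hn]; exact le_max_of_le_left (abs_nonneg _)),
      maxOp_top hn, hS, habs v]
    split
    · exact max_eq_left (by rw [div_le_one hn0]; exact_mod_cast (by omega : 1 ≤ n))
    · exact max_eq_right (by positivity)
  have hMsum : ∑ v, |maxOp (⊤ : SimpleGraph (Fin n)) (kdelta z) v| ^ p
      = 1 + ((n : ℝ) - 1) / (n : ℝ) ^ p := by
    rw [← Finset.add_sum_erase _ _ (mem_univ z), hM z, if_pos rfl, Real.one_rpow]
    have : ∀ v ∈ univ.erase z,
        |maxOp (⊤ : SimpleGraph (Fin n)) (kdelta z) v| ^ p = 1 / (n : ℝ) ^ p := by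
      intro v hv
      rw [hM v, if_neg (Finset.ne_of_mem_erase hv), Real.div_rpow zero_le_one hn0.le,
        Real.one_rpow]
    rw [Finset.sum_congr rfl this, Finset.sum_const, nsmul_eq_mul,
      Finset.card_erase_of_mem (mem_univ z)]
    simp only [card_univ, Fintype.card_fin]
    rw [Nat.cast_sub (by omega)]
    field_simp
    simp
  rw [hpd, div_one]
  unfold pNorm
  rw [hMsum]

/-- bounds for the ℓ^p norm of the maximal operator of the complete
graph, for 1 < p < ∞. -/
theorem stmt6 (n : ℕ) (hn : 2 ≤ n) (p : ℝ) (hp : 1 < p) :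
    (1 + ((n : ℝ) - 1) / (n : ℝ) ^ p) ^ (1 / p) ≤ opNorm (⊤ : SimpleGraph (Fin n)) p ∧
    opNorm (⊤ : SimpleGraph (Fin n)) p ≤ (1 + ((n : ℝ) - 1) / (n : ℝ)) ^ (1 / p) ∧
    1 ≤ opNorm (⊤ : SimpleGraph (Fin n)) p ∧
    opNorm (⊤ : SimpleGraph (Fin n)) p ≤ 2 := by
  have hp0 : (0 : ℝ) < p := lt_trans one_pos hp
  have hn0 : (0 : ℝ) < n := by positivity
  have hn1 : (1 : ℝ) ≤ n := by exact_mod_cast (by omega : 1 ≤ n)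
  set z : Fin n := ⟨0, by omega⟩
  have hz : kdelta z ≠ 0 := by
    intro h
    have := congrFun h z
    simp [kdelta] at this
  haveI : Nonempty {f : Fin n → ℝ // f ≠ 0} := ⟨⟨kdelta z, hz⟩⟩
  set U : ℝ := (1 + ((n : ℝ) - 1) / n) ^ (1 / p) with hUdef
  have hU : ∀ g : {f : Fin n → ℝ // f ≠ 0},
      pNorm p (maxOp (⊤ : SimpleGraph (Fin n)) g.1) / pNorm p g.1 ≤ U :=
    fun g => upper_ratio hn hp g.1 g.2
  have hbdd : BddAbove (Set.range fun g : {f : Fin n → ℝ // f ≠ 0} =>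
      pNorm p (maxOp (⊤ : SimpleGraph (Fin n)) g.1) / pNorm p g.1) := by
    refine ⟨U, ?_⟩
    rintro x ⟨g, rfl⟩
    exact hU g
  have hupper : opNorm (⊤ : SimpleGraph (Fin n)) p ≤ U := ciSup_le hU
  have hlower : (1 + ((n : ℝ) - 1) / (n : ℝ) ^ p) ^ (1 / p)
      ≤ opNorm (⊤ : SimpleGraph (Fin n)) p := by
    have := le_ciSup hbdd (⟨kdelta z, hz⟩ : {f : Fin n → ℝ // f ≠ 0})
    rwa [show (⟨kdelta z, hz⟩ : {f : Fin n → ℝ // f ≠ 0}).1 = kdelta z from rfl,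
      delta_ratio hn hp] at this
  have hbase1 : (1 : ℝ) ≤ 1 + ((n : ℝ) - 1) / (n : ℝ) ^ p := by
    have : (0 : ℝ) ≤ ((n : ℝ) - 1) / (n : ℝ) ^ p :=
      div_nonneg (by linarith) (Real.rpow_nonneg hn0.le p)
    linarith
  have h1le : (1 : ℝ) ≤ (1 + ((n : ℝ) - 1) / (n : ℝ) ^ p) ^ (1 / p) := by
    calc (1 : ℝ) = 1 ^ (1 / p) := (Real.one_rpow _).symm
      _ ≤ _ := Real.rpow_le_rpow zero_le_one hbase1 (by positivity)
  have hbase2 : 1 + ((n : ℝ) - 1) / n ≤ 2 := by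
    have : ((n : ℝ) - 1) / n ≤ 1 := by
      rw [div_le_one hn0]; linarith
    linarith
  have hU2 : U ≤ 2 := by
    have h2 : U ≤ (2 : ℝ) ^ (1 / p) :=
      Real.rpow_le_rpow (by linarith [div_nonneg (by linarith : (0:ℝ) ≤ (n:ℝ)-1) hn0.le]) hbase2 (by positivity)
    calc U ≤ (2 : ℝ) ^ (1 / p) := h2
      _ ≤ (2 : ℝ) ^ (1 : ℝ) := Real.rpow_le_rpow_of_exponent_le (by norm_num)
          (by rw [div_le_one hp0]; linarith)
      _ = 2 := Real.rpow_one 2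
  exact ⟨hlower, hupper, le_trans h1le hlower, le_trans hupper hU2⟩
end
end

section
/- For every n ≥ 3, on the vertex set V = {1,…,n}, one has ‖M_{[L_n]}‖_1 = ‖M_{[S_n]}‖_1 = ‖M_{S_n}‖_1 = (n+1)/2, where the ℓ^1 operator norms are ‖T‖_1 = sup{‖Tf‖_1/‖f‖_1 : f ≢ 0}. -/
open scoped Classical
open Finset

noncomputable section

variable {V : Type*} [Fintype V]

set_option linter.unusedSectionVars false

lemma mem_gBall_self (G : SimpleGraph V) (v : V) (r : ℕ) : v ∈ gBall G v r := by
  simp [gBall, SimpleGraph.dist_self]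

lemma mem_gBall (G : SimpleGraph V) (v w : V) (r : ℕ) :
    w ∈ gBall G v r ↔ G.dist v w ≤ r := by simp [gBall]

lemma sum_kdelta_abs (k : V) (s : Finset V) :
    (∑ w ∈ s, |kdelta k w|) = if k ∈ s then 1 else 0 := by
  have : ∀ w, |kdelta k w| = if w = k then 1 else 0 := by
    intro w; unfold kdelta; split <;> simp
  simp only [this]
  exact Finset.sum_ite_eq' s k (fun _ => 1)

lemma term_nonneg (G : SimpleGraph V) (f : V → ℝ) (v : V) (r : ℕ) :
    0 ≤ (∑ w ∈ gBall G v r, |f w|) / ((gBall G v r).card : ℝ) :=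
  div_nonneg (Finset.sum_nonneg fun _ _ => abs_nonneg _) (Nat.cast_nonneg _)

lemma term_le_maxOp (G : SimpleGraph V) (f : V → ℝ) (v : V) (k : Fin (Fintype.card V)) :
    (∑ w ∈ gBall G v k.1, |f w|) / ((gBall G v k.1).card : ℝ) ≤ maxOp G f v := by
  unfold maxOp
  exact le_ciSup (f := fun k : Fin (Fintype.card V) =>
    (∑ w ∈ gBall G v k.1, |f w|) / ((gBall G v k.1).card : ℝ))
    (Finite.bddAbove_range _) k

lemma maxOp_le [Nonempty V] {G : SimpleGraph V} {f : V → ℝ} {v : V} {c : ℝ}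
    (h : ∀ k : Fin (Fintype.card V),
      (∑ w ∈ gBall G v k.1, |f w|) / ((gBall G v k.1).card : ℝ) ≤ c) :
    maxOp G f v ≤ c := by
  have : Nonempty (Fin (Fintype.card V)) := ⟨⟨0, Fintype.card_pos⟩⟩
  exact ciSup_le h

lemma maxOp_nonneg [Nonempty V] (G : SimpleGraph V) (f : V → ℝ) (v : V) :
    0 ≤ maxOp G f v :=
  le_trans (term_nonneg G f v 0) (term_le_maxOp G f v ⟨0, Fintype.card_pos⟩)

lemma maxOp_kdelta_le_one [Nonempty V] (G : SimpleGraph V) (k v : V) :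
    maxOp G (kdelta k) v ≤ 1 := by
  apply maxOp_le
  intro r
  rw [sum_kdelta_abs]
  have hv : v ∈ gBall G v r.1 := mem_gBall_self G v r.1
  have hcard : (1 : ℝ) ≤ ((gBall G v r.1).card : ℝ) := by
    exact_mod_cast Finset.card_pos.mpr ⟨v, hv⟩
  split
  · rw [div_le_one (by linarith)]; linarith
  · simp

lemma maxOp_kdelta_le_half [Nonempty V] (G : SimpleGraph V) {k v : V} (h : v ≠ k) :
    maxOp G (kdelta k) v ≤ 1 / 2 := by
  apply maxOp_le
  intro r
  rw [sum_kdelta_abs]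
  by_cases hk : k ∈ gBall G v r.1
  · simp only [hk, if_true]
    have hsub : ({v, k} : Finset V) ⊆ gBall G v r.1 := by
      intro x hx
      rcases Finset.mem_insert.mp hx with h' | h'
      · exact h' ▸ mem_gBall_self G v r.1
      · exact (Finset.mem_singleton.mp h') ▸ hk
    have h2 : (2 : ℝ) ≤ ((gBall G v r.1).card : ℝ) := by
      have := Finset.card_le_card hsub
      rw [Finset.card_pair h] at this
      exact_mod_cast this
    rw [div_le_div_iff₀ (by linarith) (by norm_num)]
    linarith
  · simp only [hk, if_false]
    rw [zero_div]
    norm_num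

lemma maxOp_sublinear [Nonempty V] (G : SimpleGraph V) (f : V → ℝ) (v : V) :
    maxOp G f v ≤ ∑ k : V, |f k| * maxOp G (kdelta k) v := by
  apply maxOp_le
  intro r
  have key : (∑ w ∈ gBall G v r.1, |f w|)
      = ∑ k : V, |f k| * (∑ w ∈ gBall G v r.1, |kdelta k w|) := by
    simp only [sum_kdelta_abs, mul_ite, mul_one, mul_zero]
    rw [Finset.sum_ite_mem, Finset.univ_inter]
  rw [key, Finset.sum_div]
  apply Finset.sum_le_sum
  intro k _
  rw [mul_div_assoc]
  exact mul_le_mul_of_nonneg_left (term_le_maxOp G (kdelta k) v r) (abs_nonneg _)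

lemma sum_half [Nonempty V] (k : V) : (∑ _v ∈ Finset.univ.erase k, (1/2 : ℝ))
    = ((Fintype.card V : ℝ) - 1) / 2 := by
  rw [Finset.sum_const, Finset.card_erase_of_mem (Finset.mem_univ k), Finset.card_univ,
    nsmul_eq_mul, Nat.cast_sub (by exact_mod_cast Fintype.card_pos : 1 ≤ Fintype.card V)]
  push_cast
  ring

lemma sum_maxOp_kdelta_le [Nonempty V] (G : SimpleGraph V) (k : V) :
    (∑ v : V, maxOp G (kdelta k) v) ≤ ((Fintype.card V : ℝ) + 1) / 2 := by
  rw [← Finset.sum_erase_add _ _ (Finset.mem_univ k)]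
  have h1 : maxOp G (kdelta k) k ≤ 1 := maxOp_kdelta_le_one G k k
  have h2 : (∑ v ∈ Finset.univ.erase k, maxOp G (kdelta k) v)
      ≤ ∑ _v ∈ Finset.univ.erase k, (1/2 : ℝ) :=
    Finset.sum_le_sum fun v hv => maxOp_kdelta_le_half G (Finset.mem_erase.mp hv).1
  rw [sum_half k] at h2
  linarith

-- maxOpIso versions

lemma maxOp_le_maxOpIso (G H : SimpleGraph V) (hH : Nonempty (H ≃g G)) (f : V → ℝ) (v : V) :
    maxOp H f v ≤ maxOpIso G f v := by
  unfold maxOpIso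
  exact le_ciSup (f := fun H : {H : SimpleGraph V // Nonempty (H ≃g G)} => maxOp H.1 f v)
    (Finite.bddAbove_range _) ⟨H, hH⟩

lemma maxOpIso_le {G : SimpleGraph V} {f : V → ℝ} {v : V} {c : ℝ}
    (h : ∀ H : SimpleGraph V, Nonempty (H ≃g G) → maxOp H f v ≤ c) :
    maxOpIso G f v ≤ c := by
  have : Nonempty {H : SimpleGraph V // Nonempty (H ≃g G)} :=
    ⟨⟨G, ⟨SimpleGraph.Iso.refl⟩⟩⟩
  exact ciSup_le fun H => h H.1 H.2

lemma maxOpIso_nonneg [Nonempty V] (G : SimpleGraph V) (f : V → ℝ) (v : V) :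
    0 ≤ maxOpIso G f v :=
  le_trans (maxOp_nonneg G f v) (maxOp_le_maxOpIso G G ⟨SimpleGraph.Iso.refl⟩ f v)

lemma maxOpIso_kdelta_le_one [Nonempty V] (G : SimpleGraph V) (k v : V) :
    maxOpIso G (kdelta k) v ≤ 1 :=
  maxOpIso_le fun H _ => maxOp_kdelta_le_one H k v

lemma maxOpIso_kdelta_le_half [Nonempty V] (G : SimpleGraph V) {k v : V} (h : v ≠ k) :
    maxOpIso G (kdelta k) v ≤ 1 / 2 :=
  maxOpIso_le fun H _ => maxOp_kdelta_le_half H h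

lemma maxOpIso_sublinear [Nonempty V] (G : SimpleGraph V) (f : V → ℝ) (v : V) :
    maxOpIso G f v ≤ ∑ k : V, |f k| * maxOpIso G (kdelta k) v := by
  apply maxOpIso_le
  intro H hH
  calc maxOp H f v ≤ ∑ k : V, |f k| * maxOp H (kdelta k) v := maxOp_sublinear H f v
  _ ≤ ∑ k : V, |f k| * maxOpIso G (kdelta k) v :=
    Finset.sum_le_sum fun k _ =>
      mul_le_mul_of_nonneg_left (maxOp_le_maxOpIso G H hH (kdelta k) v) (abs_nonneg _)

lemma sum_maxOpIso_kdelta_le [Nonempty V] (G : SimpleGraph V) (k : V) :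
    (∑ v : V, maxOpIso G (kdelta k) v) ≤ ((Fintype.card V : ℝ) + 1) / 2 := by
  rw [← Finset.sum_erase_add _ _ (Finset.mem_univ k)]
  have h1 : maxOpIso G (kdelta k) k ≤ 1 := maxOpIso_kdelta_le_one G k k
  have h2 : (∑ v ∈ Finset.univ.erase k, maxOpIso G (kdelta k) v)
      ≤ ∑ _v ∈ Finset.univ.erase k, (1/2 : ℝ) :=
    Finset.sum_le_sum fun v hv => maxOpIso_kdelta_le_half G (Finset.mem_erase.mp hv).1
  rw [sum_half k] at h2
  linarith

-- pNorm facts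

lemma pNorm_one (f : V → ℝ) : pNorm 1 f = ∑ v, |f v| := by
  unfold pNorm
  norm_num [Real.rpow_one]

lemma pNorm_one_pos {f : V → ℝ} (hf : f ≠ 0) : 0 < pNorm 1 f := by
  rw [pNorm_one]
  obtain ⟨v, hv⟩ := Function.ne_iff.mp hf
  exact Finset.sum_pos' (fun _ _ => abs_nonneg _) ⟨v, Finset.mem_univ v, abs_pos.mpr hv⟩

lemma pNorm_one_kdelta (k : V) : pNorm 1 (kdelta k) = 1 := by
  rw [pNorm_one, sum_kdelta_abs, if_pos (Finset.mem_univ k)]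

lemma kdelta_ne_zero (k : V) : kdelta k ≠ 0 := by
  intro h
  have := congrFun h k
  simp [kdelta] at this

/-- evaluation of the operator-norm supremum -/
lemma opNorm_eval {T : (V → ℝ) → (V → ℝ)} {C : ℝ}
    (hub : ∀ f : V → ℝ, f ≠ 0 → pNorm 1 (T f) ≤ C * pNorm 1 f)
    (f0 : V → ℝ) (hf0 : f0 ≠ 0) (heq : pNorm 1 (T f0) = C * pNorm 1 f0) :
    (⨆ f : {f : V → ℝ // f ≠ 0}, pNorm 1 (T f.1) / pNorm 1 f.1) = C := by
  have hb : ∀ f : {f : V → ℝ // f ≠ 0}, pNorm 1 (T f.1) / pNorm 1 f.1 ≤ C := fun f => by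
    rw [div_le_iff₀ (pNorm_one_pos f.2)]
    exact hub f.1 f.2
  have hne : Nonempty {f : V → ℝ // f ≠ 0} := ⟨⟨f0, hf0⟩⟩
  apply le_antisymm
  · exact ciSup_le hb
  · have hval : pNorm 1 (T f0) / pNorm 1 f0 = C := by
      rw [heq, mul_div_assoc, div_self (ne_of_gt (pNorm_one_pos hf0)), mul_one]
    calc C = pNorm 1 (T f0) / pNorm 1 f0 := hval.symm
    _ ≤ _ := le_ciSup (⟨C, by rintro x ⟨f, rfl⟩; exact hb f⟩ : BddAbove _)
        (⟨f0, hf0⟩ : {f : V → ℝ // f ≠ 0})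

lemma pNorm_one_maxOp_le [Nonempty V] (G : SimpleGraph V) (f : V → ℝ) :
    pNorm 1 (maxOp G f) ≤ ((Fintype.card V : ℝ) + 1) / 2 * pNorm 1 f := by
  rw [pNorm_one, pNorm_one]
  calc (∑ v, |maxOp G f v|) = ∑ v, maxOp G f v := by
        refine Finset.sum_congr rfl fun v _ => abs_of_nonneg (maxOp_nonneg G f v)
  _ ≤ ∑ v : V, ∑ k : V, |f k| * maxOp G (kdelta k) v :=
        Finset.sum_le_sum fun v _ => maxOp_sublinear G f v
  _ = ∑ k : V, |f k| * ∑ v : V, maxOp G (kdelta k) v := by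
        rw [Finset.sum_comm]; simp [Finset.mul_sum]
  _ ≤ ∑ k : V, |f k| * (((Fintype.card V : ℝ) + 1) / 2) :=
        Finset.sum_le_sum fun k _ =>
          mul_le_mul_of_nonneg_left (sum_maxOp_kdelta_le G k) (abs_nonneg _)
  _ = ((Fintype.card V : ℝ) + 1) / 2 * ∑ v, |f v| := by
        rw [← Finset.sum_mul]; ring

lemma pNorm_one_maxOpIso_le [Nonempty V] (G : SimpleGraph V) (f : V → ℝ) :
    pNorm 1 (maxOpIso G f) ≤ ((Fintype.card V : ℝ) + 1) / 2 * pNorm 1 f := by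
  rw [pNorm_one, pNorm_one]
  calc (∑ v, |maxOpIso G f v|) = ∑ v, maxOpIso G f v := by
        refine Finset.sum_congr rfl fun v _ => abs_of_nonneg (maxOpIso_nonneg G f v)
  _ ≤ ∑ v : V, ∑ k : V, |f k| * maxOpIso G (kdelta k) v :=
        Finset.sum_le_sum fun v _ => maxOpIso_sublinear G f v
  _ = ∑ k : V, |f k| * ∑ v : V, maxOpIso G (kdelta k) v := by
        rw [Finset.sum_comm]; simp [Finset.mul_sum]
  _ ≤ ∑ k : V, |f k| * (((Fintype.card V : ℝ) + 1) / 2) :=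
        Finset.sum_le_sum fun k _ =>
          mul_le_mul_of_nonneg_left (sum_maxOpIso_kdelta_le G k) (abs_nonneg _)
  _ = ((Fintype.card V : ℝ) + 1) / 2 * ∑ v, |f v| := by
        rw [← Finset.sum_mul]; ring



-- distance is preserved by isomorphisms

lemma iso_dist_eq {V W : Type*} {G : SimpleGraph V} {G' : SimpleGraph W}
    (φ : G ≃g G') (a b : V) : G'.dist (φ a) (φ b) = G.dist a b := by
  by_cases h : G.Reachable a b
  · apply le_antisymm
    · obtain ⟨p, hp⟩ := h.exists_walk_length_eq_dist
      calc G'.dist (φ a) (φ b) ≤ (p.map φ.toHom).length := SimpleGraph.dist_le _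
      _ = G.dist a b := by rw [SimpleGraph.Walk.length_map, hp]
    · have h' : G'.Reachable (φ a) (φ b) := h.map φ.toHom
      obtain ⟨p, hp⟩ := h'.exists_walk_length_eq_dist
      have h2 := SimpleGraph.dist_le (p.map φ.symm.toHom)
      rw [SimpleGraph.Walk.length_map, hp] at h2
      simpa using h2
  · have h' : ¬ G'.Reachable (φ a) (φ b) := fun hr => h (by simpa using hr.map φ.symm.toHom)
    rw [SimpleGraph.dist_eq_zero_iff_eq_or_not_reachable.mpr (Or.inr h'),
      SimpleGraph.dist_eq_zero_iff_eq_or_not_reachable.mpr (Or.inr h)]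

lemma maxOp_kdelta_ge_of_ball {G : SimpleGraph V} {v k : V} {r : Fin (Fintype.card V)}
    {s : Finset V} (hs : gBall G v r.1 = s) (hk : k ∈ s) :
    (1 : ℝ) / (s.card : ℝ) ≤ maxOp G (kdelta k) v := by
  have h := term_le_maxOp G (kdelta k) v r
  rwa [hs, sum_kdelta_abs, if_pos hk] at h

-- star graph facts

lemma starGraph_adj {n : ℕ} [NeZero n] {i j : Fin n} :
    (starGraph n).Adj i j ↔ i ≠ j ∧ (i = 0 ∨ j = 0) := by
  rw [starGraph, SimpleGraph.fromRel_adj]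
  constructor
  · rintro ⟨h1, h2 | h2⟩
    · exact ⟨h1, Or.inl (Fin.ext (by simpa using h2))⟩
    · exact ⟨h1, Or.inr (Fin.ext (by simpa using h2))⟩
  · rintro ⟨h1, rfl | rfl⟩
    · exact ⟨h1, Or.inl rfl⟩
    · exact ⟨h1, Or.inr rfl⟩

lemma starGraph_reachable {n : ℕ} [NeZero n] (v w : Fin n) :
    (starGraph n).Reachable v w := by
  have h0 : ∀ u : Fin n, (starGraph n).Reachable 0 u := by
    intro u
    by_cases hu : u = 0
    · subst hu; exact SimpleGraph.Reachable.refl 0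
    · exact (starGraph_adj.mpr ⟨fun h => hu h.symm, Or.inl rfl⟩).reachable
  exact (h0 v).symm.trans (h0 w)

lemma star_gBall_zero {n : ℕ} [NeZero n] : gBall (starGraph n) 0 0 = {0} := by
  ext w
  simp only [mem_gBall, Finset.mem_singleton, Nat.le_zero]
  constructor
  · intro h
    rcases SimpleGraph.dist_eq_zero_iff_eq_or_not_reachable.mp h with h | h
    · exact h.symm
    · exact absurd (starGraph_reachable 0 w) h
  · rintro rfl; exact SimpleGraph.dist_self

lemma star_gBall_one {n : ℕ} [NeZero n] {v : Fin n} (hv : v ≠ 0) :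
    gBall (starGraph n) v 1 = {v, 0} := by
  ext w
  simp only [mem_gBall, Finset.mem_insert, Finset.mem_singleton]
  constructor
  · intro h
    rcases Nat.le_one_iff_eq_zero_or_eq_one.mp h with h | h
    · left
      rcases SimpleGraph.dist_eq_zero_iff_eq_or_not_reachable.mp h with h | h
      · exact h.symm
      · exact absurd (starGraph_reachable v w) h
    · right
      have hadj := SimpleGraph.dist_eq_one_iff_adj.mp h
      rcases (starGraph_adj.mp hadj).2 with h' | h'
      · exact absurd h' hv
      · exact h'
  · rintro (rfl | rfl)
    · simp [SimpleGraph.dist_self]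
    · exact le_of_eq (SimpleGraph.dist_eq_one_iff_adj.mpr (starGraph_adj.mpr ⟨hv, Or.inr rfl⟩))

lemma maxOp_star_kdelta {n : ℕ} (hn : 3 ≤ n) [NeZero n] (v : Fin n) :
    maxOp (starGraph n) (kdelta 0) v = if v = 0 then 1 else 1/2 := by
  haveI : Nonempty (Fin n) := ⟨0⟩
  split_ifs with hv
  · subst hv
    refine le_antisymm (maxOp_kdelta_le_one _ _ _) ?_
    have h := maxOp_kdelta_ge_of_ball
      (r := (⟨0, by rw [Fintype.card_fin]; omega⟩ : Fin (Fintype.card (Fin n))))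
      star_gBall_zero (Finset.mem_singleton_self 0)
    simpa using h
  · refine le_antisymm (maxOp_kdelta_le_half _ hv) ?_
    have h := maxOp_kdelta_ge_of_ball
      (r := (⟨1, by rw [Fintype.card_fin]; omega⟩ : Fin (Fintype.card (Fin n))))
      (star_gBall_one hv) (by simp : (0 : Fin n) ∈ ({v, 0} : Finset (Fin n)))
    rwa [Finset.card_pair hv] at h
    
lemma maxOpIso_star_kdelta {n : ℕ} (hn : 3 ≤ n) [NeZero n] (v : Fin n) :
    maxOpIso (starGraph n) (kdelta 0) v = if v = 0 then 1 else 1/2 := by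
  haveI : Nonempty (Fin n) := ⟨0⟩
  have hle := maxOp_le_maxOpIso (starGraph n) (starGraph n) ⟨SimpleGraph.Iso.refl⟩ (kdelta 0) v
  rw [maxOp_star_kdelta hn v] at hle
  split_ifs with hv
  · rw [if_pos hv] at hle
    exact le_antisymm (maxOpIso_kdelta_le_one _ _ _) hle
  · rw [if_neg hv] at hle
    exact le_antisymm (maxOpIso_kdelta_le_half _ hv) hle

-- path graph facts

lemma pathGraph_conn {n : ℕ} (hn : 3 ≤ n) : (SimpleGraph.pathGraph n).Connected := by
  have h := SimpleGraph.pathGraph_connected (n - 1)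
  rwa [Nat.sub_add_cancel (by omega : 1 ≤ n)] at h

lemma fin_val_one {n : ℕ} (hn : 3 ≤ n) [NeZero n] : ((1 : Fin n) : ℕ) = 1 := by
  rw [Fin.val_one']
  exact Nat.mod_eq_of_lt (by omega)

lemma path_dist_le_one {n : ℕ} (hn : 3 ≤ n) [NeZero n] {u : Fin n} :
    (SimpleGraph.pathGraph n).dist 0 u ≤ 1 ↔ u = 0 ∨ u = 1 := by
  constructor
  · intro h
    rcases Nat.le_one_iff_eq_zero_or_eq_one.mp h with h | h
    · left
      exact (((pathGraph_conn hn).dist_eq_zero_iff).mp h).symm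
    · right
      have hadj := SimpleGraph.dist_eq_one_iff_adj.mp h
      rw [SimpleGraph.pathGraph_adj] at hadj
      rcases hadj with h' | h'
      · apply Fin.ext
        rw [fin_val_one hn]
        simpa using h'.symm
      · simp at h'
  · rintro (rfl | rfl)
    · simp [SimpleGraph.dist_self]
    · apply le_of_eq
      apply SimpleGraph.dist_eq_one_iff_adj.mpr
      rw [SimpleGraph.pathGraph_adj]
      left
      rw [fin_val_one hn]
      simp

lemma path_gBall_zero {n : ℕ} (hn : 3 ≤ n) [NeZero n] :
    gBall (SimpleGraph.pathGraph n) 0 0 = {0} := by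
  ext w
  simp only [mem_gBall, Finset.mem_singleton, Nat.le_zero]
  rw [(pathGraph_conn hn).dist_eq_zero_iff]
  exact eq_comm

lemma maxOpIso_path_kdelta {n : ℕ} (hn : 3 ≤ n) [NeZero n] (v : Fin n) :
    maxOpIso (SimpleGraph.pathGraph n) (kdelta 0) v = if v = 0 then 1 else 1/2 := by
  haveI : Nonempty (Fin n) := ⟨0⟩
  have h01 : (0 : Fin n) ≠ 1 := by
    intro h
    have := congrArg Fin.val h
    rw [fin_val_one hn] at this
    simp at this
  split_ifs with hv
  · subst hv
    refine le_antisymm (maxOpIso_kdelta_le_one _ _ _) ?_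
    have h := maxOp_kdelta_ge_of_ball
      (r := (⟨0, by rw [Fintype.card_fin]; omega⟩ : Fin (Fintype.card (Fin n))))
      (path_gBall_zero hn) (Finset.mem_singleton_self 0)
    have h2 := maxOp_le_maxOpIso (SimpleGraph.pathGraph n) (SimpleGraph.pathGraph n)
      ⟨SimpleGraph.Iso.refl⟩ (kdelta 0) 0
    calc (1:ℝ) = 1 / (({(0 : Fin n)} : Finset (Fin n)).card : ℝ) := by simp
    _ ≤ maxOp (SimpleGraph.pathGraph n) (kdelta 0) 0 := h
    _ ≤ _ := h2
  · refine le_antisymm (maxOpIso_kdelta_le_half _ hv) ?_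
    set σ : Fin n ≃ Fin n := (Equiv.swap (1 : Fin n) v).trans (Equiv.swap 0 1) with hσ
    have hσv : σ v = 0 := by
      rw [hσ, Equiv.trans_apply, Equiv.swap_apply_right, Equiv.swap_apply_right]
    have hσ0 : σ 0 = 1 := by
      rw [hσ, Equiv.trans_apply,
        Equiv.swap_apply_of_ne_of_ne h01 (Ne.symm hv), Equiv.swap_apply_left]
    set H : SimpleGraph (Fin n) :=
      (SimpleGraph.pathGraph n).comap σ.toEmbedding with hH
    have hdist : ∀ a b : Fin n, H.dist a b = (SimpleGraph.pathGraph n).dist (σ a) (σ b) := by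
      intro a b
      have h := (iso_dist_eq (SimpleGraph.Iso.comap σ (SimpleGraph.pathGraph n)) a b).symm
      rw [hH]
      simpa using h
    have hball : gBall H v 1 = {v, 0} := by
      ext w
      rw [mem_gBall, hdist, hσv, path_dist_le_one hn]
      simp only [Finset.mem_insert, Finset.mem_singleton]
      constructor
      · rintro (h | h)
        · left
          exact σ.injective (by rw [h, hσv])
        · right
          exact σ.injective (by rw [h, hσ0])
      · rintro (rfl | rfl)
        · exact Or.inl hσv
        · exact Or.inr hσ0
    have h := maxOp_kdelta_ge_of_ball
      (r := (⟨1, by rw [Fintype.card_fin]; omega⟩ : Fin (Fintype.card (Fin n))))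
      hball (by simp : (0 : Fin n) ∈ ({v, 0} : Finset (Fin n)))
    rw [Finset.card_pair hv] at h
    have h2 := maxOp_le_maxOpIso (SimpleGraph.pathGraph n) H ⟨SimpleGraph.Iso.comap σ (SimpleGraph.pathGraph n)⟩ (kdelta 0) v
    calc (1:ℝ)/2 = 1 / ((2 : ℕ) : ℝ) := by norm_num
    _ ≤ maxOp H (kdelta 0) v := h
    _ ≤ _ := h2

lemma sum_eq_target {n : ℕ} (hn : 3 ≤ n) [NeZero n] {g : Fin n → ℝ}
    (h : ∀ v, g v = if v = (0 : Fin n) then 1 else 1/2) :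
    ∑ v, g v = ((n : ℝ) + 1) / 2 := by
  simp only [h]
  rw [← Finset.sum_erase_add _ _ (Finset.mem_univ (0 : Fin n)), if_pos rfl,
    Finset.sum_congr rfl (fun v hv => if_neg (Finset.mem_erase.mp hv).1),
    Finset.sum_const, Finset.card_erase_of_mem (Finset.mem_univ _), Finset.card_univ,
    Fintype.card_fin, nsmul_eq_mul, Nat.cast_sub (by omega : 1 ≤ n)]
  push_cast
  ring

lemma pnorm_of_values {n : ℕ} (hn : 3 ≤ n) [NeZero n] {g : Fin n → ℝ}
    (h : ∀ v, g v = if v = (0 : Fin n) then 1 else 1/2) :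
    pNorm 1 g = ((n : ℝ) + 1) / 2 := by
  rw [pNorm_one]
  have habs : ∀ v, |g v| = g v := fun v => by rw [h v]; split <;> norm_num
  calc (∑ v, |g v|) = ∑ v, g v := by simp only [habs]
  _ = _ := sum_eq_target hn h



/-- the ℓ¹ norms of the isomorphism-maximal operators of the path
and the star, and of the maximal operator of the star. -/
theorem stmt11 (n : ℕ) (hn : 3 ≤ n) :
    opNormIso (SimpleGraph.pathGraph n) 1 = ((n : ℝ) + 1) / 2 ∧
    opNormIso (starGraph n) 1 = ((n : ℝ) + 1) / 2 ∧
    opNorm (starGraph n) 1 = ((n : ℝ) + 1) / 2 := by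
  haveI : NeZero n := ⟨by omega⟩
  haveI : Nonempty (Fin n) := ⟨0⟩
  refine ⟨?_, ?_, ?_⟩
  · unfold opNormIso
    refine opNorm_eval ?_ (kdelta 0) (kdelta_ne_zero 0) ?_
    · intro f hf
      have h := pNorm_one_maxOpIso_le (SimpleGraph.pathGraph n) f
      rwa [Fintype.card_fin] at h
    · rw [pNorm_one_kdelta, mul_one]
      exact pnorm_of_values hn (maxOpIso_path_kdelta hn)
  · unfold opNormIso
    refine opNorm_eval ?_ (kdelta 0) (kdelta_ne_zero 0) ?_
    · intro f hf
      have h := pNorm_one_maxOpIso_le (starGraph n) f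
      rwa [Fintype.card_fin] at h
    · rw [pNorm_one_kdelta, mul_one]
      exact pnorm_of_values hn (maxOpIso_star_kdelta hn)
  · unfold opNorm
    refine opNorm_eval ?_ (kdelta 0) (kdelta_ne_zero 0) ?_
    · intro f hf
      have h := pNorm_one_maxOp_le (starGraph n) f
      rwa [Fintype.card_fin] at h
    · rw [pNorm_one_kdelta, mul_one]
      exact pnorm_of_values hn (maxOp_star_kdelta hn)
end
end
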